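/- Let ℱ be a nonempty closed convex set of free states, 𝔉 a set of channels each of which maps ℱ into ℱ, and assume that for every σ ∈ ℱ the replacement channel τ ↦ Tr(τ)σ belongs to 𝔉. Then for every channel N and every probe state ρ ∈ D(H), the advantage of ρ over free probe states in discriminating N from 𝔉 is bounded by the trace-norm resource of ρ: p_succ(N, 𝔉, ρ) − p_succ(N, 𝔉, ℱ) ≤ (1/2)·ω₁(ρ). -/

import Mathlib

open scoped Kronecker ComplexOrder

variable {ι : Type*} [Fintype ι] [DecidableEq ι]

/-- A quantum state: positive semidefinite matrix of trace one. -/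
def IsState (ρ : Matrix ι ι ℂ) : Prop := ρ.PosSemidef ∧ ρ.trace = 1

/-- The action of `id_n ⊗ N` on block matrices. -/
def idTensorMap (n : ℕ) (N : Matrix ι ι ℂ →ₗ[ℂ] Matrix ι ι ℂ)
    (M : Matrix (Fin n × ι) (Fin n × ι) ℂ) : Matrix (Fin n × ι) (Fin n × ι) ℂ :=
  Matrix.of fun p q => N (Matrix.of fun k l => M (p.1, k) (q.1, l)) p.2 q.2

/-- A quantum channel: completely positive trace preserving linear map. -/
structure Channel (ι : Type*) [Fintype ι] [DecidableEq ι] where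
  map : Matrix ι ι ℂ →ₗ[ℂ] Matrix ι ι ℂ
  cp : ∀ (n : ℕ) (M : Matrix (Fin n × ι) (Fin n × ι) ℂ), M.PosSemidef →
        (idTensorMap n map M).PosSemidef
  tp : ∀ A : Matrix ι ι ℂ, (map A).trace = A.trace

/-- The square root of a positive semidefinite matrix (removed from Mathlib; old definition). -/
noncomputable def Matrix.PosSemidef.sqrt {n : Type*} [Fintype n] [DecidableEq n]
    {A : Matrix n n ℂ} (hA : A.PosSemidef) : Matrix n n ℂ :=
  (hA.isHermitian.eigenvectorUnitary : Matrix n n ℂ) *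
    Matrix.diagonal ((↑) ∘ Real.sqrt ∘ hA.isHermitian.eigenvalues) *
    (star hA.isHermitian.eigenvectorUnitary : Matrix n n ℂ)

/-- The trace norm ‖A‖₁ = Tr √(AᴴA). -/
noncomputable def traceNorm (A : Matrix ι ι ℂ) : ℝ :=
  ((Matrix.posSemidef_conjTranspose_mul_self A).sqrt).trace.re

/-- Trace-norm resource measure ω₁. -/
noncomputable def omega1 (F : Set (Matrix ι ι ℂ)) (ρ : Matrix ι ι ℂ) : ℝ :=
  (1/2) * sInf ((fun σ => traceNorm (ρ - σ)) '' F)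

/-- Trace-norm resource generating power Ω₁. -/
noncomputable def genPower1 (F : Set (Matrix ι ι ℂ)) (N : Matrix ι ι ℂ → Matrix ι ι ℂ) : ℝ :=
  sSup ((fun ρ => omega1 F (N ρ)) '' F)

/-- Trace-norm resource increasing power Ω̃₁. -/
noncomputable def incPower1 (F : Set (Matrix ι ι ℂ)) (N : Matrix ι ι ℂ → Matrix ι ι ℂ) : ℝ :=
  sSup ((fun ρ => omega1 F (N ρ) - omega1 F ρ) '' {ρ | IsState ρ})

/-- Holevo–Helstrom success probability of discriminating two channels with probe `ρ`. -/
noncomputable def psuccPair (N M : Matrix ι ι ℂ → Matrix ι ι ℂ) (ρ : Matrix ι ι ℂ) : ℝ :=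
  1/2 + (1/4) * traceNorm (N ρ - M ρ)

/-- Success probability of discriminating `N` from the set of channels `Free` with probe `ρ`. -/
noncomputable def psuccChan (N : Matrix ι ι ℂ → Matrix ι ι ℂ) (Free : Set (Channel ι))
    (ρ : Matrix ι ι ℂ) : ℝ :=
  sInf ((fun M : Channel ι => psuccPair N (⇑M.map) ρ) '' Free)

/-- Maximum success probability of discriminating `N` from `Free` using probes from `F`. -/
noncomputable def psuccFF (N : Matrix ι ι ℂ → Matrix ι ι ℂ) (Free : Set (Channel ι))
    (F : Set (Matrix ι ι ℂ)) : ℝ :=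
  sSup ((fun ρ => psuccChan N Free ρ) '' F)

open Matrix

noncomputable def hfun (A : Matrix ι ι ℂ) (hA : A.IsHermitian) (f : ℝ → ℝ) : Matrix ι ι ℂ :=
  (hA.eigenvectorUnitary : Matrix ι ι ℂ) * diagonal (RCLike.ofReal ∘ f ∘ hA.eigenvalues) *
    star (hA.eigenvectorUnitary : Matrix ι ι ℂ)

lemma star_mul_self_eigU (A : Matrix ι ι ℂ) (hA : A.IsHermitian) :
    star (hA.eigenvectorUnitary : Matrix ι ι ℂ) * (hA.eigenvectorUnitary : Matrix ι ι ℂ) = 1 := by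
  rw [← Unitary.coe_star]; exact Unitary.coe_star_mul_self _

lemma mul_star_self_eigU (A : Matrix ι ι ℂ) (hA : A.IsHermitian) :
    (hA.eigenvectorUnitary : Matrix ι ι ℂ) * star (hA.eigenvectorUnitary : Matrix ι ι ℂ) = 1 := by
  rw [← Unitary.coe_star]; exact Unitary.coe_mul_star_self _

lemma hfun_congr (A : Matrix ι ι ℂ) (hA : A.IsHermitian) {f g : ℝ → ℝ} (h : ∀ x, f x = g x) :
    hfun A hA f = hfun A hA g := by
  have : (RCLike.ofReal ∘ f ∘ hA.eigenvalues : ι → ℂ) = RCLike.ofReal ∘ g ∘ hA.eigenvalues := by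
    ext i; simp [h]
  unfold hfun; rw [this]

lemma hfun_mul (A : Matrix ι ι ℂ) (hA : A.IsHermitian) (f g : ℝ → ℝ) :
    hfun A hA f * hfun A hA g = hfun A hA (fun x => f x * g x) := by
  unfold hfun
  simp only [mul_assoc]
  rw [← mul_assoc (star (hA.eigenvectorUnitary : Matrix ι ι ℂ)), star_mul_self_eigU A hA, one_mul,
    ← mul_assoc (diagonal (RCLike.ofReal ∘ f ∘ hA.eigenvalues)), diagonal_mul_diagonal]
  have h2 : (fun i => (RCLike.ofReal ∘ f ∘ hA.eigenvalues) i * ((RCLike.ofReal ∘ g ∘ hA.eigenvalues) i : ℂ))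
      = (RCLike.ofReal ∘ (fun x => f x * g x) ∘ hA.eigenvalues) := by
    ext i; simp
  rw [h2]

lemma hfun_id (A : Matrix ι ι ℂ) (hA : A.IsHermitian) : hfun A hA id = A := by
  rw [hfun]; exact hA.spectral_theorem.symm

lemma hfun_trace (A : Matrix ι ι ℂ) (hA : A.IsHermitian) (f : ℝ → ℝ) :
    (hfun A hA f).trace = ∑ i, (f (hA.eigenvalues i) : ℂ) := by
  unfold hfun
  rw [trace_mul_cycle, star_mul_self_eigU A hA, one_mul, trace_diagonal]
  simp

lemma hfun_posSemidef (A : Matrix ι ι ℂ) (hA : A.IsHermitian) {f : ℝ → ℝ}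
    (hf : ∀ x, 0 ≤ f x) : (hfun A hA f).PosSemidef := by
  unfold hfun
  rw [star_eq_conjTranspose]
  apply PosSemidef.mul_mul_conjTranspose_same
  refine posSemidef_diagonal_iff.mpr fun i => ?_
  rw [Function.comp_apply, RCLike.nonneg_iff]
  exact ⟨by simpa using hf _, by simp⟩

lemma hfun_sub (A : Matrix ι ι ℂ) (hA : A.IsHermitian) (f g : ℝ → ℝ) :
    hfun A hA f - hfun A hA g = hfun A hA (fun x => f x - g x) := by
  unfold hfun
  rw [← sub_mul, ← mul_sub, diagonal_sub]
  have h2 : (fun i => (RCLike.ofReal ∘ f ∘ hA.eigenvalues) i - ((RCLike.ofReal ∘ g ∘ hA.eigenvalues) i : ℂ))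
      = (RCLike.ofReal ∘ (fun x => f x - g x) ∘ hA.eigenvalues) := by
    ext i; simp
  rw [h2]

lemma sqrt_congr {B C : Matrix ι ι ℂ} (h : B = C) (hB : B.PosSemidef) (hC : C.PosSemidef) :
    hB.sqrt = hC.sqrt := by subst h; rfl

open scoped MatrixOrder in
lemma psd_sqrt_eq_cfc {A : Matrix ι ι ℂ} (hA : A.PosSemidef) : hA.sqrt = CFC.sqrt A := by
  rw [CFC.sqrt_eq_real_sqrt A hA.nonneg, cfcₙ_eq_cfc, hA.1.cfc_eq, IsHermitian.cfc,
    Unitary.conjStarAlgAut_apply]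
  rfl

open scoped MatrixOrder in
lemma psd_eq_sqrt_of_sq_eq {A B : Matrix ι ι ℂ} (hB : B.PosSemidef) (hA : A.PosSemidef)
    (h : B ^ 2 = A) : B = hA.sqrt := by
  rw [psd_sqrt_eq_cfc, eq_comm]
  exact CFC.sqrt_unique (by rw [← sq]; exact h) hB.nonneg

lemma traceNorm_eq_sum_abs (A : Matrix ι ι ℂ) (hA : A.IsHermitian) :
    traceNorm A = ∑ i, |hA.eigenvalues i| := by
  have hP : (hfun A hA (fun x => |x|)).PosSemidef := hfun_posSemidef A hA (fun x => abs_nonneg x)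
  have hsq : hfun A hA (fun x => |x|) ^ 2 = Aᴴ * A := by
    rw [pow_two, hfun_mul, show Aᴴ = A from hA]
    conv_rhs => rw [← hfun_id A hA]
    rw [hfun_mul]
    exact hfun_congr A hA (fun x => abs_mul_abs_self x)
  have h := psd_eq_sqrt_of_sq_eq hP (Matrix.posSemidef_conjTranspose_mul_self A) hsq
  rw [traceNorm, ← h, hfun_trace]
  simp

lemma trace_re_eq_sum (A : Matrix ι ι ℂ) (hA : A.IsHermitian) :
    A.trace.re = ∑ i, hA.eigenvalues i := by
  conv_lhs => rw [← hfun_id A hA]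
  rw [hfun_trace]
  simp

lemma traceNorm_nonneg (A : Matrix ι ι ℂ) (hA : A.IsHermitian) : 0 ≤ traceNorm A := by
  rw [traceNorm_eq_sum_abs A hA]
  positivity

lemma traceNorm_of_posSemidef {A : Matrix ι ι ℂ} (hA : A.PosSemidef) :
    traceNorm A = A.trace.re := by
  rw [traceNorm_eq_sum_abs A hA.1, trace_re_eq_sum A hA.1]
  exact Finset.sum_congr rfl fun i _ => abs_of_nonneg (hA.eigenvalues_nonneg i)

lemma traceNorm_neg (A : Matrix ι ι ℂ) : traceNorm (-A) = traceNorm A := by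
  unfold traceNorm
  rw [sqrt_congr (by simp : (-A)ᴴ * (-A) = Aᴴ * A) (Matrix.posSemidef_conjTranspose_mul_self (-A))
    (Matrix.posSemidef_conjTranspose_mul_self A)]

lemma quad_hfun_bound (B : Matrix ι ι ℂ) (hB : B.IsHermitian) (f : ℝ → ℝ) (hf : ∀ x, |f x| ≤ 1)
    (v : ι → ℂ) : |(star v ⬝ᵥ (hfun B hB f) *ᵥ v).re| ≤ (star v ⬝ᵥ v).re := by
  set U := (hB.eigenvectorUnitary : Matrix ι ι ℂ) with hUdef
  set w : ι → ℂ := star U *ᵥ v with hwdef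
  have hsw : star w = star v ᵥ* U := by
    rw [hwdef, star_eq_conjTranspose U, star_mulVec, conjTranspose_conjTranspose]
  have key : star v ⬝ᵥ (hfun B hB f) *ᵥ v
      = ∑ k, ((f (hB.eigenvalues k) * Complex.normSq (w k) : ℝ) : ℂ) := by
    rw [hfun, ← hUdef, ← mulVec_mulVec, ← mulVec_mulVec, dotProduct_mulVec, ← hsw]
    rw [dotProduct]
    refine Finset.sum_congr rfl fun k _ => ?_
    rw [mulVec_diagonal]
    have : (star w) k = (starRingEnd ℂ) (w k) := rfl
    rw [this]
    rw [Function.comp_apply, Function.comp_apply]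
    rw [show (RCLike.ofReal (f (hB.eigenvalues k)) : ℂ) = ((f (hB.eigenvalues k) : ℝ) : ℂ) from rfl]
    push_cast
    rw [show ((starRingEnd ℂ) (w k) * (((f (hB.eigenvalues k)) : ℂ) * w k))
        = ((f (hB.eigenvalues k)) : ℂ) * (w k * (starRingEnd ℂ) (w k)) by ring, Complex.mul_conj]
  have hnorm : star w ⬝ᵥ w = star v ⬝ᵥ v := by
    calc star w ⬝ᵥ w = (star v ᵥ* U) ⬝ᵥ (star U *ᵥ v) := by rw [hsw, hwdef]
    _ = ((star v ᵥ* U) ᵥ* star U) ⬝ᵥ v := by rw [dotProduct_mulVec]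
    _ = (star v ᵥ* (U * star U)) ⬝ᵥ v := by rw [vecMul_vecMul]
    _ = star v ⬝ᵥ v := by rw [hUdef, mul_star_self_eigU, vecMul_one]
  have hnorm2 : (star v ⬝ᵥ v).re = ∑ k, Complex.normSq (w k) := by
    rw [← hnorm, dotProduct]
    have : ∀ k : ι, (star w) k * w k = ((Complex.normSq (w k) : ℝ) : ℂ) := by
      intro k
      have : (star w) k = (starRingEnd ℂ) (w k) := rfl
      rw [this, mul_comm, Complex.mul_conj]
    rw [Finset.sum_congr rfl fun k _ => this k, ← Complex.ofReal_sum]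
    simp
  rw [key, hnorm2, ← Complex.ofReal_sum, Complex.ofReal_re]
  refine (Finset.abs_sum_le_sum_abs _ _).trans ?_
  refine Finset.sum_le_sum fun k _ => ?_
  rw [abs_mul, abs_of_nonneg (Complex.normSq_nonneg (w k))]
  calc |f (hB.eigenvalues k)| * Complex.normSq (w k) ≤ 1 * Complex.normSq (w k) :=
    mul_le_mul_of_nonneg_right (hf _) (Complex.normSq_nonneg _)
  _ = _ := one_mul _

lemma trace_mul_le_traceNorm (A X : Matrix ι ι ℂ) (hA : A.IsHermitian)
    (hX : ∀ v : ι → ℂ, |(star v ⬝ᵥ X *ᵥ v).re| ≤ (star v ⬝ᵥ v).re) :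
    ((A * X).trace).re ≤ traceNorm A := by
  set U := (hA.eigenvectorUnitary : Matrix ι ι ℂ) with hUdef
  set D := diagonal (RCLike.ofReal ∘ hA.eigenvalues : ι → ℂ) with hDdef
  have hAX : A * X = U * (D * (star U * X)) := by
    conv_lhs => rw [hA.spectral_theorem]
    rw [Unitary.conjStarAlgAut_apply, mul_assoc, mul_assoc]
  have hcyc : (A * X).trace = (D * (star U * X * U)).trace := by
    rw [hAX, trace_mul_comm, mul_assoc D, mul_assoc (star U)]
  have hdiag : (D * (star U * X * U)).trace
      = ∑ k, (RCLike.ofReal (hA.eigenvalues k) : ℂ) * (star U * X * U) k k := by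
    rw [hDdef]
    simp [Matrix.trace, Matrix.diag, diagonal_mul]
  have hcol : ∀ k, (star U * X * U) k k
      = star (fun i => U i k) ⬝ᵥ X *ᵥ (fun i => U i k) := by
    intro k
    simp only [mul_apply, dotProduct, mulVec, Pi.star_apply, Matrix.star_apply,
      Finset.sum_mul, Finset.mul_sum]
    rw [Finset.sum_comm]
    exact Finset.sum_congr rfl fun b _ => Finset.sum_congr rfl fun a _ => by ring
  have hcolnorm : ∀ k, (star (fun i => U i k) ⬝ᵥ (fun i => U i k) : ℂ) = 1 := by
    intro k
    have h1 : (star U * U) k k = (1 : Matrix ι ι ℂ) k k := by rw [star_mul_self_eigU A hA]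
    simpa [mul_apply, dotProduct, Pi.star_apply, Matrix.star_apply, one_apply] using h1
  rw [hcyc, hdiag, traceNorm_eq_sum_abs A hA, Complex.re_sum]
  refine Finset.sum_le_sum fun k _ => ?_
  rw [show (RCLike.ofReal (hA.eigenvalues k) : ℂ) = ((hA.eigenvalues k : ℝ) : ℂ) from rfl,
    Complex.re_ofReal_mul]
  have h1 : |((star U * X * U) k k).re| ≤ 1 := by
    rw [hcol k]
    have h3 := hX (fun i => U i k)
    have h2 : ((star (fun i => U i k) ⬝ᵥ (fun i => U i k) : ℂ)).re = 1 := by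
      rw [hcolnorm k]; simp
    linarith
  calc hA.eigenvalues k * ((star U * X * U) k k).re
      ≤ |hA.eigenvalues k * ((star U * X * U) k k).re| := le_abs_self _
    _ = |hA.eigenvalues k| * |((star U * X * U) k k).re| := abs_mul _ _
    _ ≤ |hA.eigenvalues k| * 1 := mul_le_mul_of_nonneg_left h1 (abs_nonneg _)
    _ = |hA.eigenvalues k| := mul_one _

lemma traceNorm_add_le (A B : Matrix ι ι ℂ) (hA : A.IsHermitian) (hB : B.IsHermitian) :
    traceNorm (A + B) ≤ traceNorm A + traceNorm B := by
  have hAB : (A + B).IsHermitian := hA.add hB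
  set s : ℝ → ℝ := fun x => if 0 ≤ x then 1 else -1 with hs
  have hs1 : ∀ x, |s x| ≤ 1 := by
    intro x; rw [hs]; dsimp only; split <;> simp
  set X := hfun (A + B) hAB s with hXdef
  have hXb : ∀ v : ι → ℂ, |(star v ⬝ᵥ X *ᵥ v).re| ≤ (star v ⬝ᵥ v).re :=
    quad_hfun_bound (A + B) hAB s hs1
  have h1 : ((A + B) * X).trace.re = traceNorm (A + B) := by
    conv_lhs => rw [← hfun_id (A + B) hAB]
    rw [hXdef, hfun_mul]
    have h2 : (fun x => id x * s x) = fun x => |x| := by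
      ext x; rw [hs]; dsimp only [id]
      split
      · rw [mul_one, abs_of_nonneg ‹_›]
      · rw [mul_neg_one, abs_of_neg (lt_of_not_ge ‹_›)]
    rw [hfun_congr (A + B) hAB (fun x => congrFun h2 x), hfun_trace,
      traceNorm_eq_sum_abs (A + B) hAB, Complex.re_sum]
    simp
  have h2 : (A + B) * X = A * X + B * X := add_mul A B X
  calc traceNorm (A + B) = ((A + B) * X).trace.re := h1.symm
    _ = (A * X).trace.re + (B * X).trace.re := by rw [h2, trace_add, Complex.add_re]
    _ ≤ traceNorm A + traceNorm B :=
        add_le_add (trace_mul_le_traceNorm A X hA hXb) (trace_mul_le_traceNorm B X hB hXb)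

lemma channel_posSemidef (M : Channel ι) {A : Matrix ι ι ℂ} (hA : A.PosSemidef) :
    (M.map A).PosSemidef := by
  have h := M.cp 1 (A.submatrix Prod.snd Prod.snd) (hA.submatrix _)
  have h2 : M.map A = (idTensorMap 1 M.map (A.submatrix Prod.snd Prod.snd)).submatrix
      (fun i : ι => ((0 : Fin 1), i)) (fun i : ι => ((0 : Fin 1), i)) := by
    ext i j; rfl
  rw [h2]
  exact h.submatrix _

lemma channel_traceNorm_le (M : Channel ι) {A : Matrix ι ι ℂ} (hA : A.IsHermitian) :
    traceNorm (M.map A) ≤ traceNorm A := by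
  set P := hfun A hA (fun x => max x 0) with hPdef
  set Q := hfun A hA (fun x => max (-x) 0) with hQdef
  have hPpsd : P.PosSemidef := hfun_posSemidef A hA (fun x => le_max_right _ _)
  have hQpsd : Q.PosSemidef := hfun_posSemidef A hA (fun x => le_max_right _ _)
  have hPQ : P - Q = A := by
    rw [hPdef, hQdef, hfun_sub]
    have h2 : ∀ x : ℝ, max x 0 - max (-x) 0 = id x := by
      intro x; dsimp only [id]
      rcases le_total x 0 with h | h
      · rw [max_eq_right h, max_eq_left (by linarith), zero_sub, neg_neg]
      · rw [max_eq_left h, max_eq_right (by linarith), sub_zero]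
    rw [hfun_congr A hA h2, hfun_id]
  have hMP : (M.map P).PosSemidef := channel_posSemidef M hPpsd
  have hMQ : (M.map Q).PosSemidef := channel_posSemidef M hQpsd
  have hsplit : M.map A = M.map P + (- M.map Q) := by
    rw [← hPQ, map_sub, sub_eq_add_neg]
  have habs : ∀ x : ℝ, max x 0 + max (-x) 0 = |x| := by
    intro x; rcases le_total x 0 with h | h
    · rw [max_eq_right h, max_eq_left (by linarith), zero_add, abs_of_nonpos h]
    · rw [max_eq_left h, max_eq_right (by linarith), add_zero, abs_of_nonneg h]
  calc traceNorm (M.map A) ≤ traceNorm (M.map P) + traceNorm (- M.map Q) := by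
        rw [hsplit]; exact traceNorm_add_le _ _ hMP.1 hMQ.1.neg
    _ = (M.map P).trace.re + (M.map Q).trace.re := by
        rw [traceNorm_neg, traceNorm_of_posSemidef hMP, traceNorm_of_posSemidef hMQ]
    _ = P.trace.re + Q.trace.re := by rw [M.tp, M.tp]
    _ = (∑ i, max (hA.eigenvalues i) 0) + ∑ i, max (-(hA.eigenvalues i)) 0 := by
        rw [hPdef, hQdef, hfun_trace, hfun_trace, ← Complex.ofReal_sum, ← Complex.ofReal_sum,
          Complex.ofReal_re, Complex.ofReal_re]
    _ = ∑ i, |hA.eigenvalues i| := by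
        rw [← Finset.sum_add_distrib]
        exact Finset.sum_congr rfl fun i _ => habs _
    _ = traceNorm A := (traceNorm_eq_sum_abs A hA).symm

/-- the advantage of a resourceful probe state over free probe states in channel
discrimination is bounded by the trace-norm resource measure of the probe. -/
theorem stmt8
    (F : Set (Matrix ι ι ℂ)) (hFne : F.Nonempty) (hFstate : ∀ ρ ∈ F, IsState ρ)
    (hFconv : Convex ℝ F) (hFclosed : IsClosed F)
    (Free : Set (Channel ι))
    (hFree : ∀ M ∈ Free, ∀ ρ ∈ F, M.map ρ ∈ F)
    (hRepl : ∀ σ ∈ F, ∃ M ∈ Free, ∀ τ : Matrix ι ι ℂ, M.map τ = τ.trace • σ)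
    (N : Channel ι) (ρ : Matrix ι ι ℂ) (hρ : IsState ρ) :
    psuccChan (⇑N.map) Free ρ - psuccFF (⇑N.map) Free F ≤ (1/2) * omega1 F ρ := by

  obtain ⟨σ₀, hσ₀⟩ := hFne
  obtain ⟨M₀, hM₀f, hM₀⟩ := hRepl σ₀ hσ₀
  -- basic facts
  have hstate_trace_re : ∀ {ρ' : Matrix ι ι ℂ}, IsState ρ' → ρ'.trace.re = 1 := by
    intro ρ' hρ'; rw [hρ'.2]; simp
  have hchan_state : ∀ (Mc : Channel ι) {ρ' : Matrix ι ι ℂ}, IsState ρ' → IsState (Mc.map ρ') :=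
    fun Mc _ h => ⟨channel_posSemidef Mc h.1, by rw [Mc.tp, h.2]⟩
  have htn_state : ∀ {ρ' : Matrix ι ι ℂ}, IsState ρ' → traceNorm ρ' = 1 := by
    intro ρ' hρ'; rw [traceNorm_of_posSemidef hρ'.1, hstate_trace_re hρ']
  -- pair bounds
  have hpair_lb : ∀ (Mc : Channel ι) {ρ' : Matrix ι ι ℂ}, IsState ρ' →
      1/2 ≤ psuccPair (⇑N.map) (⇑Mc.map) ρ' := by
    intro Mc ρ' hρ'
    have h := traceNorm_nonneg (N.map ρ' - Mc.map ρ')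
      (((hchan_state N hρ').1.1).sub ((hchan_state Mc hρ').1.1))
    rw [psuccPair]; linarith
  have hpair_ub : ∀ (Mc : Channel ι) {ρ' : Matrix ι ι ℂ}, IsState ρ' →
      psuccPair (⇑N.map) (⇑Mc.map) ρ' ≤ 1 := by
    intro Mc ρ' hρ'
    have h1 : traceNorm (N.map ρ' - Mc.map ρ') ≤ 2 := by
      calc traceNorm (N.map ρ' - Mc.map ρ')
          = traceNorm (N.map ρ' + -(Mc.map ρ')) := by rw [sub_eq_add_neg]
        _ ≤ traceNorm (N.map ρ') + traceNorm (-(Mc.map ρ')) :=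
            traceNorm_add_le _ _ (hchan_state N hρ').1.1 (hchan_state Mc hρ').1.1.neg
        _ = 1 + 1 := by
            rw [traceNorm_neg, htn_state (hchan_state N hρ'), htn_state (hchan_state Mc hρ')]
        _ = 2 := by norm_num
    rw [psuccPair]; linarith
  -- psuccChan facts
  have hchanSet_ne : ∀ ρ' : Matrix ι ι ℂ,
      ((fun M : Channel ι => psuccPair (⇑N.map) (⇑M.map) ρ') '' Free).Nonempty :=
    fun ρ' => ⟨_, ⟨M₀, hM₀f, rfl⟩⟩
  have hchanSet_bdd : ∀ {ρ' : Matrix ι ι ℂ}, IsState ρ' →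
      BddBelow ((fun M : Channel ι => psuccPair (⇑N.map) (⇑M.map) ρ') '' Free) := by
    intro ρ' hρ'
    exact ⟨1/2, by rintro r ⟨Mc, hMc, rfl⟩; exact hpair_lb Mc hρ'⟩
  have hchan_le : ∀ (Mc : Channel ι), Mc ∈ Free → ∀ {ρ' : Matrix ι ι ℂ}, IsState ρ' →
      psuccChan (⇑N.map) Free ρ' ≤ psuccPair (⇑N.map) (⇑Mc.map) ρ' := by
    intro Mc hMc ρ' hρ'
    exact csInf_le (hchanSet_bdd hρ') ⟨Mc, hMc, rfl⟩
  have hchan_ub : ∀ {ρ' : Matrix ι ι ℂ}, IsState ρ' → psuccChan (⇑N.map) Free ρ' ≤ 1 :=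
    fun hρ' => (hchan_le M₀ hM₀f hρ').trans (hpair_ub M₀ hρ')
  -- psuccFF lower bound by free probes
  have hFF_ge : ∀ σ' ∈ F, psuccChan (⇑N.map) Free σ' ≤ psuccFF (⇑N.map) Free F := by
    intro σ' hσ'
    refine le_csSup ⟨1, ?_⟩ ⟨σ', hσ', rfl⟩
    rintro r ⟨τ, hτ, rfl⟩
    exact hchan_ub (hFstate τ hτ)
  -- main estimate for each σ' ∈ F
  have main : ∀ σ' ∈ F, psuccChan (⇑N.map) Free ρ - psuccFF (⇑N.map) Free F ≤
      (1/4) * traceNorm (ρ - σ') := by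
    intro σ' hσ'
    have hσ's : IsState σ' := hFstate σ' hσ'
    set T : ℝ := traceNorm (N.map ρ - N.map σ') with hTdef
    set Dset : Set ℝ := (fun τ => traceNorm (N.map σ' - τ)) '' F with hDsetdef
    have hDne : Dset.Nonempty := ⟨_, ⟨σ', hσ', rfl⟩⟩
    have hDbdd : BddBelow Dset := by
      refine ⟨0, ?_⟩
      rintro r ⟨τ, hτ, rfl⟩
      exact traceNorm_nonneg _ ((hchan_state N hσ's).1.1.sub (hFstate τ hτ).1.1)
    set D : ℝ := sInf Dset with hDdef
    -- lower bound on psuccChan at σ'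
    have h3 : 1/2 + (1/4) * D ≤ psuccChan (⇑N.map) Free σ' := by
      refine le_csInf (hchanSet_ne σ') ?_
      rintro r ⟨Mc, hMc, rfl⟩
      have hDle : D ≤ traceNorm (N.map σ' - Mc.map σ') :=
        csInf_le hDbdd ⟨Mc.map σ', hFree Mc hMc σ' hσ', rfl⟩
      simp only [psuccPair]; linarith
    -- upper bound on psuccChan at ρ via replacement channels
    have h1 : ∀ τ ∈ F, psuccChan (⇑N.map) Free ρ ≤ 1/2 + (1/4) * traceNorm (N.map ρ - τ) := by
      intro τ hτ
      obtain ⟨Mτ, hMτf, hMτ⟩ := hRepl τ hτ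
      have h2 : psuccPair (⇑N.map) (⇑Mτ.map) ρ = 1/2 + (1/4) * traceNorm (N.map ρ - τ) := by
        rw [psuccPair, hMτ ρ, hρ.2, one_smul]
      rw [← h2]
      exact hchan_le Mτ hMτf hρ
    have h4 : psuccChan (⇑N.map) Free ρ ≤ 1/2 + (1/4) * (T + D) := by
      have h5 : 4 * psuccChan (⇑N.map) Free ρ - 2 - T ≤ D := by
        refine le_csInf hDne ?_
        rintro r ⟨τ, hτ, rfl⟩
        have h6 := h1 τ hτ
        have h7 : traceNorm (N.map ρ - τ) ≤ T + traceNorm (N.map σ' - τ) := by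
          have h8 : N.map ρ - τ = (N.map ρ - N.map σ') + (N.map σ' - τ) := by abel
          rw [h8, hTdef]
          exact traceNorm_add_le _ _
            ((hchan_state N hρ).1.1.sub (hchan_state N hσ's).1.1)
            ((hchan_state N hσ's).1.1.sub (hFstate τ hτ).1.1)
        linarith
      linarith
    have h5 : T ≤ traceNorm (ρ - σ') := by
      rw [hTdef, ← map_sub]
      exact channel_traceNorm_le N (hρ.1.1.sub hσ's.1.1)
    have h6 := hFF_ge σ' hσ'
    linarith
  -- conclude via infimum over σ' ∈ F
  rw [omega1]
  have hne : ((fun σ => traceNorm (ρ - σ)) '' F).Nonempty := ⟨_, ⟨σ₀, hσ₀, rfl⟩⟩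
  have hln : 4 * (psuccChan (⇑N.map) Free ρ - psuccFF (⇑N.map) Free F) ≤
      sInf ((fun σ => traceNorm (ρ - σ)) '' F) := by
    refine le_csInf hne ?_
    rintro r ⟨σ', hσ', rfl⟩
    have := main σ' hσ'
    linarith
  linarith
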